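/- Suppose (k_a, u_a) ∈ ℝ² with k_a > 0 satisfies the competitive stationary system λ(u_a − α) = δk_a and (r+δ)u_a = h(p/(k_a+ε) − c)⁺, and (k_m, u_m) ∈ ℝ² with k_m > 0 satisfies the monopoly stationary system λ(u_m − α) = δk_m and (r+δ)u_m = hpε/(k_m+ε)² − hc. Then k_m < k_a: the monopoly equilibrium capacity is strictly smaller than the competitive equilibrium capacity. -/
import Mathlib


/-- Comparison of regimes: the monopoly equilibrium capacity is strictly smaller than the
competitive equilibrium capacity. -/
theorem monopoly_lt_competitive
    (r δ lam h p ε c α : ℝ)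
    (hr : 0 < r) (hδ : 0 < δ) (hlam : 0 < lam) (hh : 0 < h) (hp : 0 < p) (hε : 0 < ε)
    (ka ua km um : ℝ) (hka : 0 < ka) (hkm : 0 < km)
    (ha1 : lam * (ua - α) = δ * ka)
    (ha2 : (r + δ) * ua = h * max (p / (ka + ε) - c) 0)
    (hm1 : lam * (um - α) = δ * km)
    (hm2 : (r + δ) * um = h * p * ε / (km + ε) ^ 2 - h * c) :
    km < ka := by
  by_contra hcon
  push_neg at hcon  -- ka ≤ km
  have hkaε : 0 < ka + ε := by linarith
  have hkmε : 0 < km + ε := by linarith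
  have hrδ : 0 < r + δ := by linarith
  -- step 2: ua ≤ um
  have hua : ua ≤ um := by
    nlinarith [mul_nonneg hδ.le (sub_nonneg.mpr hcon)]
  have h1 : (r + δ) * ua ≤ (r + δ) * um :=
    mul_le_mul_of_nonneg_left hua hrδ.le
  -- step 1: (r+δ)*um < (r+δ)*ua
  have hA : h * p * ε / (km + ε) ^ 2 < h * p / (km + ε) := by
    rw [div_lt_div_iff₀ (by positivity) hkmε]
    nlinarith [mul_pos (mul_pos hh hp) hkm, mul_pos hkm hkmε]
  have hB : h * p / (km + ε) ≤ h * p / (ka + ε) := by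
    apply div_le_div_of_nonneg_left (by positivity) hkaε
    linarith
  have hmax : h * (p / (km + ε) - c) ≤ h * max (p / (ka + ε) - c) 0 := by
    have : p / (km + ε) - c ≤ max (p / (ka + ε) - c) 0 := by
      have : p / (km + ε) ≤ p / (ka + ε) := by
        apply div_le_div_of_nonneg_left hp.le hkaε; linarith
      exact le_trans (by linarith) (le_max_left _ _)
    exact mul_le_mul_of_nonneg_left this hh.le
  have h2 : (r + δ) * um < (r + δ) * ua := by
    rw [hm2, ha2]
    have : h * p * ε / (km + ε) ^ 2 - h * c < h * (p / (km + ε) - c) := by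
      rw [mul_sub, ← mul_div_assoc]
      linarith [hA]
    linarith [hmax]
  linarith
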